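/- Let T = Pf(ω_𝒫) for a parsed word ω_𝒫 ∈ P([n]^{⊗k}). Then the number of columns of the left-justified representative *T equals the length of the longest weakly decreasing subword of ω (a subword being a subsequence of letters of ω, in order but not necessarily contiguous). -/

import Mathlib

namespace PerfTab

/-- A rectangular tableau: `entry r j` is the content of the box in row `r`
(row `0` is the top row) and column `j` (column `0` is leftmost); `none` is a blank. -/
structure Tab where
  entry : ℕ → ℕ → Option ℕ
  rows : ℕ
  cols : ℕ

/-- The perforated-tableau conditions. -/
structure IsPTab (T : Tab) : Prop where
  pos : ∀ r j v, T.entry r j = some v → 0 < v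
  row_bound : ∀ r j, T.rows ≤ r → T.entry r j = none
  col_bound : ∀ r j, T.cols ≤ j → T.entry r j = none
  no_blank_col : ∀ j < T.cols, ∃ r, (T.entry r j).isSome
  strip : ∀ v r r' j j', T.entry r j = some v → T.entry r' j' = some v → r < r' → j' < j
  shadow : ∀ v w r₁ j₁ r₂ j₂, T.entry r₁ j₁ = some v → T.entry r₂ j₂ = some w →
    v < w → r₁ < r₂ ∨ j₁ < j₂

/-- One swap of a blank with a horizontally adjacent non-blank entry, both sides
being valid ptableaux with the same dimensions. -/
def SwapStep (T T' : Tab) : Prop :=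
  IsPTab T ∧ IsPTab T' ∧ T.rows = T'.rows ∧ T.cols = T'.cols ∧
  ∃ r j,
    ((T.entry r j = none ∧ (T.entry r (j + 1)).isSome) ∨
      ((T.entry r j).isSome ∧ T.entry r (j + 1) = none)) ∧
    T'.entry r j = T.entry r (j + 1) ∧ T'.entry r (j + 1) = T.entry r j ∧
    ∀ r' j', ¬(r' = r ∧ (j' = j ∨ j' = j + 1)) → T'.entry r' j' = T.entry r' j'

/-- Row equivalence of perforated tableaux. -/
def RowEquiv (T T' : Tab) : Prop :=
  IsPTab T ∧ IsPTab T' ∧ Relation.ReflTransGen SwapStep T T'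

/-- The (increasing) list of columns of the non-blank boxes in row `r`. -/
def filledCols (T : Tab) (r : ℕ) : List ℕ :=
  (List.range T.cols).filter fun j => (T.entry r j).isSome

/-- The list of values in row `r`, read left to right. -/
def rowVals (T : Tab) (r : ℕ) : List ℕ :=
  (List.range T.cols).filterMap fun j => T.entry r j

def blanksInRow (T : Tab) (r : ℕ) : ℕ :=
  ((List.range T.cols).filter fun j => (T.entry r j).isNone).length

/-- Number of filled boxes in row `r` (the `r`-th component of the weight). -/
def rowFill (T : Tab) (r : ℕ) : ℕ := (filledCols T r).length

def rowCount (T : Tab) (v r : ℕ) : ℕ :=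
  ((List.range T.cols).filter fun j => decide (T.entry r j = some v)).length

/-- Number of boxes with value `v` in rows `a` through `b` (inclusive, 0-indexed). -/
def countValRows (T : Tab) (v a b : ℕ) : ℕ :=
  ((List.range (b + 1 - a)).map fun t => rowCount T v (a + t)).sum

def totalCount (T : Tab) (v : ℕ) : ℕ :=
  ((List.range T.rows).map fun r => rowCount T v r).sum

/-- `T` is left-justified: each entry of `T` is weakly to the left of the
corresponding entry in every row-equivalent ptableau. -/
def LeftJustified (T : Tab) : Prop :=
  ∀ T', RowEquiv T T' → ∀ r, List.Forall₂ (· ≤ ·) (filledCols T r) (filledCols T' r)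

def RightJustified (T : Tab) : Prop :=
  ∀ T', RowEquiv T T' → ∀ r, List.Forall₂ (fun a b => b ≤ a) (filledCols T r) (filledCols T' r)

/-! ### Words and parsings -/

/-- A word in `[n]^{⊗ k}` for some `k ≥ 1`. -/
def IsWord (n : ℕ) (w : List ℕ) : Prop := w ≠ [] ∧ ∀ a ∈ w, 1 ≤ a ∧ a ≤ n

def flatP : List (List ℕ) → List ℕ
  | [] => []
  | h :: t => h ++ flatP t

/-- A parsed word over `[n]`: a list of weakly decreasing factors with letters in `[n]`. -/
def IsParsedWord (n : ℕ) (P : List (List ℕ)) : Prop :=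
  (∀ h ∈ P, List.Chain' (fun a b => b ≤ a) h) ∧ ∀ h ∈ P, ∀ a ∈ h, 1 ≤ a ∧ a ≤ n

/-- The minimal parsing of a word into maximal weakly decreasing factors. -/
def minParse : List ℕ → List (List ℕ)
  | [] => []
  | a :: t =>
    match t, minParse t with
    | b :: _, h :: rest => if b ≤ a then (a :: h) :: rest else [a] :: h :: rest
    | _, _ => [[a]]

/-! ### The map `Pf` from parsed words to perforated tableaux -/

/-- Column at which the next box in row `row` is placed: one more than the largest
column used so far in rows weakly below `row`. -/
def pfCol (placed : List (ℕ × ℕ × ℕ)) (row : ℕ) : ℕ :=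
  (placed.filterMap fun b => if row ≤ b.1 then some (b.2.1 + 1) else none).foldr max 0

/-- Greedy placement of indexed letters: a letter `a` of the `s`-th factor becomes a
box with value `s` in row `a - 1`.  Boxes are triples `(row, col, value)`. -/
def pfBoxes : List (ℕ × ℕ) → List (ℕ × ℕ × ℕ) → List (ℕ × ℕ × ℕ)
  | [], placed => placed
  | sa :: rest, placed =>
    pfBoxes rest (placed ++ [(sa.2 - 1, pfCol placed (sa.2 - 1), sa.1)])

def indexedLetters : List (List ℕ) → ℕ → List (ℕ × ℕ)
  | [], _ => []
  | h :: t, s => (h.map fun a => (s, a)) ++ indexedLetters t (s + 1)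

/-- The perforated tableau (in left-justified form) associated to a parsed word. -/
def Pf (P : List (List ℕ)) (n : ℕ) : Tab :=
  let boxes := pfBoxes (indexedLetters P 1) []
  { entry := fun r j =>
      boxes.findSome? fun b => if b.1 = r ∧ b.2.1 = j then some b.2.2 else none
    rows := n
    cols := (boxes.map fun b => b.2.1 + 1).foldr max 0 }

def splitLens : List ℕ → List ℕ → List (List ℕ)
  | [], _ => []
  | l :: ls, w => w.take l :: splitLens ls (w.drop l)

/-- Re-parse the word `w` using the factor lengths of the parsing `P`. -/
def reparse (P : List (List ℕ)) (w : List ℕ) : List (List ℕ) :=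
  splitLens (P.map List.length) w

/-- A minimally parsed ptableau: the head of the `(v+1)`-strip lies strictly below
the tail of the `v`-strip. -/
def MinimallyParsed (T : Tab) : Prop :=
  ∀ v, 1 ≤ v → (∃ r j, T.entry r j = some (v + 1)) →
    ∃ r j r' j', T.entry r j = some (v + 1) ∧ T.entry r' j' = some v ∧ r' < r

/-! ### Kashiwara crystal operators on words -/

def ce (i : ℕ) (w : List ℕ) (j : ℕ) : ℤ :=
  ((w.take j).count (i + 1) : ℤ) - ((w.take (j - 1)).count i : ℤ)

def cf (i : ℕ) (w : List ℕ) (j : ℕ) : ℤ :=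
  ((w.drop (j - 1)).count i : ℤ) - ((w.drop j).count (i + 1) : ℤ)

def maxOver (k : ℕ) (g : ℕ → ℤ) : ℤ := ((List.range k).map g).foldr max (g 0)

/-- The raising operator `e_i` on words (Kashiwara convention). -/
def wordE (i : ℕ) (w : List ℕ) : Option (List ℕ) :=
  if w.length = 0 then none
  else
    let M := maxOver w.length fun j0 => ce i w (j0 + 1)
    match (List.range w.length).find? fun j0 => decide (ce i w (j0 + 1) = M) with
    | some j0 => if w.getD j0 0 = i + 1 then some (w.set j0 i) else none
    | none => none

/-- The lowering operator `f_i` on words (Kashiwara convention). -/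
def wordF (i : ℕ) (w : List ℕ) : Option (List ℕ) :=
  if w.length = 0 then none
  else
    let M := maxOver w.length fun j0 => cf i w (j0 + 1)
    if M ≤ 0 then none
    else
      match (List.range w.length).reverse.find? fun j0 => decide (cf i w (j0 + 1) = M) with
      | some j0 => if w.getD j0 0 = i then some (w.set j0 (i + 1)) else none
      | none => none

/-! ### Crystal operators on perforated tableaux -/

/-- `T[i,i+1]`: the two-row tableau formed by rows `i` and `i+1` of `T`,
with all-blank columns deleted. -/
def rowPair (T : Tab) (i : ℕ) : Tab :=
  let keep := (List.range T.cols).filter fun j =>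
    (T.entry i j).isSome || (T.entry (i + 1) j).isSome
  { entry := fun r j =>
      if r < 2 ∧ j < keep.length then T.entry (i + r) (keep.getD j 0) else none
    rows := 2
    cols := keep.length }

/-- `T'` is obtained from `T` by the ptableau raising operator for the row pair
`(i, i+1)` (`0`-indexed), the swap occurring in column `c'` of the left-justified
representative: in `*T[i,i+1]` the rightmost bottom-row entry with a blank directly
above it is the `k`-th filled box of the bottom row; the corresponding `k`-th filled
box of row `i+1` of `*T`, in column `c'`, is swapped with the blank above it. -/
def PtabEAt (i c' : ℕ) (T T' : Tab) : Prop :=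
  ∃ (L L₂ : Tab) (k c : ℕ),
    RowEquiv T L ∧ LeftJustified L ∧
    RowEquiv (rowPair T i) L₂ ∧ LeftJustified L₂ ∧
    (filledCols L₂ 1)[k]? = some c ∧ L₂.entry 0 c = none ∧
    (∀ c₂, (L₂.entry 1 c₂).isSome → L₂.entry 0 c₂ = none → c₂ ≤ c) ∧
    (filledCols L (i + 1))[k]? = some c' ∧ L.entry i c' = none ∧
    T'.rows = L.rows ∧ T'.cols = L.cols ∧
    T'.entry i c' = L.entry (i + 1) c' ∧ T'.entry (i + 1) c' = none ∧
    ∀ r j, ¬(j = c' ∧ (r = i ∨ r = i + 1)) → T'.entry r j = L.entry r j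

def PtabE (i : ℕ) (T T' : Tab) : Prop := ∃ c', PtabEAt i c' T T'

/-- `e_i(T) = NULL`: no bottom-row entry of `*T[i,i+1]` has a blank above it. -/
def PtabENull (i : ℕ) (T : Tab) : Prop :=
  ∀ L₂, RowEquiv (rowPair T i) L₂ → LeftJustified L₂ →
    ∀ c, (L₂.entry 1 c).isSome → (L₂.entry 0 c).isSome

/-- `T'` is obtained from `T` by the ptableau lowering operator for the row pair
`(i, i+1)` (`0`-indexed), the swap occurring in column `c'` of the right-justified
representative. -/
def PtabFAt (i c' : ℕ) (T T' : Tab) : Prop :=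
  ∃ (R R₂ : Tab) (k c : ℕ),
    RowEquiv T R ∧ RightJustified R ∧
    RowEquiv (rowPair T i) R₂ ∧ RightJustified R₂ ∧
    (filledCols R₂ 0)[k]? = some c ∧ R₂.entry 1 c = none ∧
    (∀ c₂, (R₂.entry 0 c₂).isSome → R₂.entry 1 c₂ = none → c ≤ c₂) ∧
    (filledCols R i)[k]? = some c' ∧ R.entry (i + 1) c' = none ∧
    T'.rows = R.rows ∧ T'.cols = R.cols ∧
    T'.entry (i + 1) c' = R.entry i c' ∧ T'.entry i c' = none ∧
    ∀ r j, ¬(j = c' ∧ (r = i ∨ r = i + 1)) → T'.entry r j = R.entry r j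

def PtabF (i : ℕ) (T T' : Tab) : Prop := ∃ c', PtabFAt i c' T T'

def PtabFNull (i : ℕ) (T : Tab) : Prop :=
  ∀ R₂, RowEquiv (rowPair T i) R₂ → RightJustified R₂ →
    ∀ c, (R₂.entry 0 c).isSome → (R₂.entry 1 c).isSome

/-- Highest weight: all raising operators are `NULL`. -/
def HighestWeight (T : Tab) : Prop := ∀ i, i + 1 < T.rows → PtabENull i T

/-- Lowest weight: all lowering operators are `NULL`. -/
def LowestWeight (T : Tab) : Prop := ∀ i, i + 1 < T.rows → PtabFNull i T

/-! ### Rotation -/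

def rotTab (l : ℕ) (T : Tab) : Tab :=
  { entry := fun r j =>
      if r < T.rows ∧ j < T.cols then
        (T.entry (T.rows - 1 - r) (T.cols - 1 - j)).map fun v => l + 1 - v
      else none
    rows := T.rows
    cols := T.cols }

def rotWord (n : ℕ) (w : List ℕ) : List ℕ := (w.map fun a => n + 1 - a).reverse

def rotParse (n : ℕ) (P : List (List ℕ)) : List (List ℕ) :=
  (P.map fun h => rotWord n h).reverse

/-! ### Shapes -/

/-- Partition-shaped: no blank of the left-justified representative has content
to its right or below it. -/
def PartitionShaped (T : Tab) : Prop :=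
  ∀ L, RowEquiv T L → LeftJustified L →
    ∀ r j, r < L.rows → j < L.cols → L.entry r j = none →
      (∀ j', j ≤ j' → L.entry r j' = none) ∧ ∀ r', r ≤ r' → L.entry r' j = none

/-- Anti-partition-shaped: no blank of the right-justified representative has content
to its left or above it. -/
def AntiPartitionShaped (T : Tab) : Prop :=
  ∀ R, RowEquiv T R → RightJustified R →
    ∀ r j, r < R.rows → j < R.cols → R.entry r j = none →
      (∀ j' ≤ j, R.entry r j' = none) ∧ ∀ r' ≤ r, R.entry r' j = none

def IsPartitionList (lam : List ℕ) : Prop := List.Chain' (fun a b => b ≤ a) lam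

/-- `T` is partition-shaped of shape `lam`. -/
def ShapeOf (T : Tab) (lam : List ℕ) : Prop :=
  PartitionShaped T ∧ ∀ r, rowFill T r = lam.getD r 0

/-! ### Tensor products -/

/-- `W = T ⊗ U` (with the entries of `U` shifted up by `l`): `W` is a left-justified
ptableau with the same rows as `T` whose row contents are those of `T` followed by
those of `U` shifted by `l`. -/
def IsTensor (l : ℕ) (T U W : Tab) : Prop :=
  IsPTab W ∧ LeftJustified W ∧ W.rows = T.rows ∧
  ∀ r, rowVals W r = rowVals T r ++ (rowVals U r).map (· + l)

/-! ### Crystal graphs -/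

def TabRel (T T' : Tab) : Prop :=
  RowEquiv T T' ∨ ∃ i, i + 1 < T.rows ∧ (PtabE i T T' ∨ PtabF i T T')

/-- Membership in the connected crystal generated by `T₀`. -/
def InCrystal (T₀ T : Tab) : Prop :=
  Relation.ReflTransGen (fun a b => TabRel a b ∨ TabRel b a) T₀ T

def WordRel (n : ℕ) (w w' : List ℕ) : Prop :=
  ∃ i, 1 ≤ i ∧ i < n ∧ (wordE i w = some w' ∨ wordF i w = some w')

def InWordCrystal (n : ℕ) (w₀ w : List ℕ) : Prop :=
  Relation.ReflTransGen (fun a b => WordRel n a b ∨ WordRel n b a) w₀ w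

/-! ### Semistandard Young tableaux and the word condition -/

/-- A semistandard Young tableau presented as its list of rows. -/
def IsSSYTrows (P : List (List ℕ)) : Prop :=
  (∀ row ∈ P, row ≠ []) ∧
  (∀ row ∈ P, ∀ a ∈ row, 1 ≤ a) ∧
  (∀ row ∈ P, List.Chain' (· ≤ ·) row) ∧
  List.Chain' (fun r₁ r₂ => r₂.length ≤ r₁.length) P ∧
  ∀ i, i + 1 < P.length → ∀ j, j < (P.getD (i + 1) []).length →
    (P.getD i []).getD j 0 < (P.getD (i + 1) []).getD j 0

/-- The word condition on ptableaux: `T = Pf(ω)` for `ω` the row-reading word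
(rows right-to-left, top to bottom) of a semistandard Young tableau; the reading
word parsed by rows is its minimal parsing. -/
def WordCond (n : ℕ) (T : Tab) : Prop :=
  ∃ P, IsSSYTrows P ∧ (∀ row ∈ P, ∀ a ∈ row, a ≤ n) ∧
    RowEquiv T (Pf (P.map List.reverse) n)

/-- The highest weight ptableau `T_ν`: row `r` consists of `ν_r` copies of `r + 1`. -/
def Tnu (n : ℕ) (nu : List ℕ) : Tab :=
  { entry := fun r j => if r < n ∧ j < nu.getD r 0 then some (r + 1) else none
    rows := n
    cols := nu.foldr max 0 }

/-! ### Skew shapes and jeu de taquin -/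

def NWblank (S : Tab) (r j : ℕ) : Prop := ∀ r' ≤ r, ∀ j' ≤ j, S.entry r' j' = none

def SEblank (S : Tab) (r j : ℕ) : Prop := ∀ r', r ≤ r' → ∀ j', j ≤ j' → S.entry r' j' = none

/-- A skew-shaped form: every blank belongs either to a partition-shaped collection
in the upper left corner or to an anti-partition-shaped collection in the lower
right corner. -/
def SkewForm (S : Tab) : Prop :=
  ∀ r < S.rows, ∀ j < S.cols, S.entry r j = none → NWblank S r j ∨ SEblank S r j

def SkewShaped (T : Tab) : Prop := ∃ S, RowEquiv T S ∧ SkewForm S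

/-- An inner corner: a blank with content directly to its right and directly below it. -/
def InnerCorner (S : Tab) (p : ℕ × ℕ) : Prop :=
  S.entry p.1 p.2 = none ∧ (S.entry p.1 (p.2 + 1)).isSome ∧ (S.entry (p.1 + 1) p.2).isSome

/-- An outer corner: a blank with content directly to its left and directly above it,
and only blanks weakly below-right of it. -/
def OuterCorner (S : Tab) (p : ℕ × ℕ) : Prop :=
  S.entry p.1 p.2 = none ∧ 1 ≤ p.1 ∧ 1 ≤ p.2 ∧
  (S.entry (p.1 - 1) p.2).isSome ∧ (S.entry p.1 (p.2 - 1)).isSome ∧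
  SEblank S p.1 p.2

def RowsWeak (S : Tab) : Prop :=
  ∀ r j j', j ≤ j' → ∀ v v', S.entry r j = some v → S.entry r j' = some v' → v ≤ v'

def ColsStrict (S : Tab) : Prop :=
  ∀ r r' j, r < r' → ∀ v v', S.entry r j = some v → S.entry r' j = some v' → v < v'

/-- Swap the blank at `p` with the content at `q`, leaving everything else unchanged. -/
def blankSwap (S : Tab) (p q : ℕ × ℕ) (S' : Tab) : Prop :=
  S'.rows = S.rows ∧ S'.cols = S.cols ∧
  S.entry p.1 p.2 = none ∧ (S.entry q.1 q.2).isSome ∧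
  S'.entry p.1 p.2 = S.entry q.1 q.2 ∧ S'.entry q.1 q.2 = none ∧
  ∀ x : ℕ × ℕ, x ≠ p → x ≠ q → S'.entry x.1 x.2 = S.entry x.1 x.2

/-- One outward jeu de taquin slide: the blank at `p` swaps with the entry to its
right or the entry below it, the unique choice keeping rows weakly increasing and
columns strictly increasing on non-blank entries. -/
def OutStep (S : Tab) (p : ℕ × ℕ) (S' : Tab) (q : ℕ × ℕ) : Prop :=
  (q = (p.1, p.2 + 1) ∨ q = (p.1 + 1, p.2)) ∧ blankSwap S p q S' ∧
  RowsWeak S' ∧ ColsStrict S'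

/-- One inward jeu de taquin slide: the blank at `p` swaps with the entry above it
if that entry is `≥` the entry to its left (or if there is no entry to the left),
and with the entry to its left otherwise. -/
def InStep (S : Tab) (p : ℕ × ℕ) (S' : Tab) (q : ℕ × ℕ) : Prop :=
  blankSwap S p q S' ∧
  ((q = (p.1 - 1, p.2) ∧ 1 ≤ p.1 ∧ (S.entry (p.1 - 1) p.2).isSome ∧
      ∀ b c, S.entry (p.1 - 1) p.2 = some b → S.entry p.1 (p.2 - 1) = some c → c ≤ b) ∨
    (q = (p.1, p.2 - 1) ∧ 1 ≤ p.2 ∧ (S.entry p.1 (p.2 - 1)).isSome ∧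
      (p.1 = 0 ∨ S.entry (p.1 - 1) p.2 = none ∨
        ∃ b c, S.entry (p.1 - 1) p.2 = some b ∧ S.entry p.1 (p.2 - 1) = some c ∧ b < c)))

/-- Outward jeu de taquin of a blank, recording the path of positions it occupies. -/
inductive OutJdtPath : Tab → List (ℕ × ℕ) → Tab → Prop
  | done (S : Tab) (p : ℕ × ℕ) :
      S.entry p.1 (p.2 + 1) = none → S.entry (p.1 + 1) p.2 = none →
      OutJdtPath S [p] S
  | step (S S₁ S' : Tab) (p q : ℕ × ℕ) (rest : List (ℕ × ℕ)) :
      OutStep S p S₁ q → OutJdtPath S₁ (q :: rest) S' →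
      OutJdtPath S (p :: q :: rest) S'

/-- Inward jeu de taquin of a blank, recording the path of positions it occupies. -/
inductive InJdtPath : Tab → List (ℕ × ℕ) → Tab → Prop
  | done (S : Tab) (p : ℕ × ℕ) :
      (p.1 = 0 ∨ S.entry (p.1 - 1) p.2 = none) →
      (p.2 = 0 ∨ S.entry p.1 (p.2 - 1) = none) →
      InJdtPath S [p] S
  | step (S S₁ S' : Tab) (p q : ℕ × ℕ) (rest : List (ℕ × ℕ)) :
      InStep S p S₁ q → InJdtPath S₁ (q :: rest) S' →
      InJdtPath S (p :: q :: rest) S'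

/-- One evacuation stage: complete inward jeu de taquin from an outer corner. -/
def EvacStep (S S' : Tab) : Prop :=
  ∃ p path, OuterCorner S p ∧ InJdtPath S (p :: path) S'

/-- `S'` is the result of the Schützenberger evacuation procedure applied to `S`. -/
def IsEvac (S S' : Tab) : Prop :=
  Relation.ReflTransGen EvacStep S S' ∧ ∀ p, ¬ OuterCorner S' p

/-! ### Two-colored configurations and the Push algorithms -/

/-- A two-colored configuration: `false` marks μ-content, `true` marks ν-content. -/
def SwitchConfig : Type := ℕ → ℕ → Option (Bool × ℕ)

def toConfig (l : ℕ) (W : Tab) : SwitchConfig := fun r j =>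
  (W.entry r j).map fun v => if v ≤ l then (false, v) else (true, v - l)

/-- Recover a tableau from a configuration, the ν-content keeping its values and the
μ-content shifted up by `m` (so the result reads as `T_ν ⊗ T'`). -/
def configToTab (m rows cols : ℕ) (C : SwitchConfig) : Tab :=
  { entry := fun r j => (C r j).map fun b => if b.1 then b.2 else b.2 + m
    rows := rows
    cols := cols }

def colorPart (b : Bool) (C : SwitchConfig) : ℕ → ℕ → Option ℕ := fun r j =>
  match C r j with
  | some bv => if bv.1 = b then some bv.2 else none
  | none => none

/-- BSS-perforated: ignoring blanks, rows weakly increase and columns strictly increase. -/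
def BSSPerf (f : ℕ → ℕ → Option ℕ) : Prop :=
  (∀ r j j', j ≤ j' → ∀ v v', f r j = some v → f r j' = some v' → v ≤ v') ∧
  ∀ r r' j, r < r' → ∀ v v', f r j = some v → f r' j = some v' → v < v'

/-- A BSS perforated pair: both color classes are BSS-perforated. -/
def BSSPair (C : SwitchConfig) : Prop :=
  BSSPerf (colorPart false C) ∧ BSSPerf (colorPart true C)

/-- Switch a μ-box at `p` with a ν-box immediately to its right or below it,
both configurations forming BSS perforated pairs. -/
def SwitchAt (C : SwitchConfig) (p q : ℕ × ℕ) (C' : SwitchConfig) : Prop :=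
  (q = (p.1, p.2 + 1) ∨ q = (p.1 + 1, p.2)) ∧
  (∃ v, C p.1 p.2 = some (false, v)) ∧ (∃ w, C q.1 q.2 = some (true, w)) ∧
  C' p.1 p.2 = C q.1 q.2 ∧ C' q.1 q.2 = C p.1 p.2 ∧
  (∀ x : ℕ × ℕ, x ≠ p → x ≠ q → C' x.1 x.2 = C x.1 x.2) ∧
  BSSPair C ∧ BSSPair C'

/-- Switch a ν-box at `p` with a μ-box immediately to its left or above it. -/
def SwitchAtIn (C : SwitchConfig) (p q : ℕ × ℕ) (C' : SwitchConfig) : Prop :=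
  ((q = (p.1, p.2 - 1) ∧ 1 ≤ p.2) ∨ (q = (p.1 - 1, p.2) ∧ 1 ≤ p.1)) ∧
  (∃ w, C p.1 p.2 = some (true, w)) ∧ (∃ v, C q.1 q.2 = some (false, v)) ∧
  C' p.1 p.2 = C q.1 q.2 ∧ C' q.1 q.2 = C p.1 p.2 ∧
  (∀ x : ℕ × ℕ, x ≠ p → x ≠ q → C' x.1 x.2 = C x.1 x.2) ∧
  BSSPair C ∧ BSSPair C'

/-- The μ-box at `p` has a ν-box immediately to its right or below it. -/
def NuAdj (C : SwitchConfig) (p : ℕ × ℕ) : Prop :=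
  ∃ q : ℕ × ℕ, (q = (p.1, p.2 + 1) ∨ q = (p.1 + 1, p.2)) ∧ ∃ w, C q.1 q.2 = some (true, w)

/-- The ν-box at `p` has a μ-box immediately to its left or above it. -/
def MuAdj (C : SwitchConfig) (p : ℕ × ℕ) : Prop :=
  ∃ q : ℕ × ℕ, ((q = (p.1, p.2 - 1) ∧ 1 ≤ p.2) ∨ (q = (p.1 - 1, p.2) ∧ 1 ≤ p.1)) ∧
    ∃ v, C q.1 q.2 = some (false, v)

/-- Push Down order: choose a μ-box of the largest value having ν-content adjacent
below or to the right; among those, the rightmost one. -/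
def MuChoice (C : SwitchConfig) (p : ℕ × ℕ) : Prop :=
  (∃ v, C p.1 p.2 = some (false, v)) ∧ NuAdj C p ∧
  ∀ (p' : ℕ × ℕ) (v v' : ℕ), C p.1 p.2 = some (false, v) → C p'.1 p'.2 = some (false, v') →
    NuAdj C p' → v' < v ∨ (v' = v ∧ p'.2 ≤ p.2)

/-- Push Up order: choose a ν-box of the smallest value having μ-content adjacent
above or to the left; among those, the leftmost one. -/
def NuChoice (C : SwitchConfig) (p : ℕ × ℕ) : Prop :=
  (∃ w, C p.1 p.2 = some (true, w)) ∧ MuAdj C p ∧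
  ∀ (p' : ℕ × ℕ) (w w' : ℕ), C p.1 p.2 = some (true, w) → C p'.1 p'.2 = some (true, w') →
    MuAdj C p' → w < w' ∨ (w' = w ∧ p.2 ≤ p'.2)

/-- Complete outward evacuation of the μ-box at `p` through the ν-content. -/
inductive EvacOutConfig : SwitchConfig → ℕ × ℕ → SwitchConfig → Prop
  | done (C : SwitchConfig) (p : ℕ × ℕ) : ¬ NuAdj C p → EvacOutConfig C p C
  | step (C C₁ C' : SwitchConfig) (p q : ℕ × ℕ) :
      SwitchAt C p q C₁ → EvacOutConfig C₁ q C' → EvacOutConfig C p C'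

/-- Complete inward (upper) evacuation of the ν-box at `p` through the μ-content. -/
inductive EvacInConfig : SwitchConfig → ℕ × ℕ → SwitchConfig → Prop
  | done (C : SwitchConfig) (p : ℕ × ℕ) : ¬ MuAdj C p → EvacInConfig C p C
  | step (C C₁ C' : SwitchConfig) (p q : ℕ × ℕ) :
      SwitchAtIn C p q C₁ → EvacInConfig C₁ q C' → EvacInConfig C p C'

/-- Final configuration: no μ-box has ν-content immediately to its right or below,
i.e. the ν-content is partition-shaped with the μ-content in a skew shape below it. -/
def FinalConfig (C : SwitchConfig) : Prop :=
  ∀ p q : ℕ × ℕ, (q = (p.1, p.2 + 1) ∨ q = (p.1 + 1, p.2)) →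
    ¬((∃ v, C p.1 p.2 = some (false, v)) ∧ ∃ w, C q.1 q.2 = some (true, w))

/-- The Push Down algorithm. -/
inductive PushDown : SwitchConfig → SwitchConfig → Prop
  | done (C : SwitchConfig) : FinalConfig C → PushDown C C
  | step (C C₁ C' : SwitchConfig) (p : ℕ × ℕ) :
      MuChoice C p → EvacOutConfig C p C₁ → PushDown C₁ C' → PushDown C C'

/-- The Push Up algorithm. -/
inductive PushUp : SwitchConfig → SwitchConfig → Prop
  | done (C : SwitchConfig) : FinalConfig C → PushUp C C
  | step (C C₁ C' : SwitchConfig) (p : ℕ × ℕ) :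
      NuChoice C p → EvacInConfig C p C₁ → PushUp C₁ C' → PushUp C C'


/-! ### Auxiliary lemmas for Statement 2 -/

private lemma foldr_max_append (l₁ l₂ : List ℕ) :
    (l₁ ++ l₂).foldr max 0 = max (l₁.foldr max 0) (l₂.foldr max 0) := by
  induction l₁ with
  | nil => simp
  | cons x t ih => simp [ih, Nat.max_assoc]

private lemma le_foldr_max {x : ℕ} {l : List ℕ} (h : x ∈ l) : x ≤ l.foldr max 0 := by
  induction l with
  | nil => simp at h
  | cons y t ih =>
    rcases List.mem_cons.mp h with rfl | h'
    · exact le_max_left _ _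
    · exact le_trans (ih h') (le_max_right _ _)

private lemma foldr_max_mono {l l' : List ℕ} (h : l.Sublist l') :
    l.foldr max 0 ≤ l'.foldr max 0 := by
  induction h with
  | slnil => exact le_rfl
  | cons y _ ih => exact le_trans ih (le_max_right _ _)
  | cons_cons y _ ih => exact max_le_max le_rfl ih

/-- Number of columns occupied by a list of boxes. -/
def colsOf (p : List (ℕ × ℕ × ℕ)) : ℕ := (p.map fun b => b.2.1 + 1).foldr max 0

lemma pfCol_append (p q : List (ℕ × ℕ × ℕ)) (r : ℕ) :
    pfCol (p ++ q) r = max (pfCol p r) (pfCol q r) := by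
  unfold pfCol
  rw [List.filterMap_append, foldr_max_append]

lemma pfCol_singleton (b : ℕ × ℕ × ℕ) (r : ℕ) :
    pfCol [b] r = if r ≤ b.1 then b.2.1 + 1 else 0 := by
  by_cases h : r ≤ b.1 <;> simp [pfCol, h]

lemma pfCol_le_of_mem {b : ℕ × ℕ × ℕ} {p : List (ℕ × ℕ × ℕ)} {r : ℕ}
    (hb : b ∈ p) (hr : r ≤ b.1) : b.2.1 + 1 ≤ pfCol p r := by
  apply le_foldr_max
  exact List.mem_filterMap.mpr ⟨b, hb, by simp [hr]⟩

lemma pfCol_zero (p : List (ℕ × ℕ × ℕ)) : pfCol p 0 = colsOf p := by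
  unfold pfCol colsOf
  congr 1
  induction p with
  | nil => rfl
  | cons b t ih =>
    simp only [List.filterMap_cons, List.map_cons]
    simp at ih ⊢

lemma colsOf_mono {p q : List (ℕ × ℕ × ℕ)} (h : p.Sublist q) : colsOf p ≤ colsOf q :=
  foldr_max_mono (h.map _)

lemma mem_le_colsOf {b : ℕ × ℕ × ℕ} {p : List (ℕ × ℕ × ℕ)} (hb : b ∈ p) :
    b.2.1 + 1 ≤ colsOf p :=
  le_foldr_max (List.mem_map_of_mem hb)

lemma pfBoxes_prefix : ∀ (L : List (ℕ × ℕ)) (p : List (ℕ × ℕ × ℕ)), p <+: pfBoxes L p := by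
  intro L
  induction L with
  | nil => intro p; exact List.prefix_rfl
  | cons sa rest ih =>
    intro p
    exact List.IsPrefix.trans (List.prefix_append _ _) (ih _)

lemma indexedLetters_map_snd :
    ∀ (P : List (List ℕ)) (s : ℕ), (indexedLetters P s).map Prod.snd = flatP P := by
  intro P
  induction P with
  | nil => intro s; rfl
  | cons h t ih =>
    intro s
    simp [indexedLetters, flatP, List.map_append, List.map_map, ih, Function.comp]

lemma indexedLetters_pos :
    ∀ (P : List (List ℕ)) (s : ℕ), (∀ h ∈ P, ∀ a ∈ h, 1 ≤ a) →
      ∀ sa ∈ indexedLetters P s, 1 ≤ sa.2 := by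
  intro P
  induction P with
  | nil => intro s _ sa hsa; simp [indexedLetters] at hsa
  | cons h t ih =>
    intro s hpos sa hsa
    simp only [indexedLetters, List.mem_append, List.mem_map] at hsa
    rcases hsa with ⟨a, ha, rfl⟩ | hsa
    · exact hpos h (by simp) a ha
    · exact ih (s + 1) (fun h' hh' => hpos h' (by simp [hh'])) sa hsa

/-- Upper bound: any nonempty weakly decreasing subword of the processed letters
gives a lower bound on the number of columns. -/
lemma pf_ub : ∀ (L : List (ℕ × ℕ)) (placed : List (ℕ × ℕ × ℕ)) (a : ℕ) (l : List ℕ),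
    (a :: l).Sublist (L.map Prod.snd) →
    List.Chain' (fun x y => y ≤ x) (a :: l) →
    pfCol placed (a - 1) + l.length + 1 ≤ colsOf (pfBoxes L placed) := by
  intro L
  induction L with
  | nil => intro placed a l hs _; simp at hs
  | cons sa rest ih =>
    intro placed a l hs hc
    rw [List.map_cons, List.sublist_cons_iff] at hs
    rw [show pfBoxes (sa :: rest) placed
        = pfBoxes rest (placed ++ [(sa.2 - 1, pfCol placed (sa.2 - 1), sa.1)]) from rfl]
    set box : ℕ × ℕ × ℕ := (sa.2 - 1, pfCol placed (sa.2 - 1), sa.1) with hbox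
    rcases hs with hs' | ⟨r, heq, hs'⟩
    · have h1 := ih (placed ++ [box]) a l hs' hc
      have h2 : pfCol placed (a - 1) ≤ pfCol (placed ++ [box]) (a - 1) := by
        rw [pfCol_append]; exact le_max_left _ _
      omega
    · injection heq with ha' hl'
      subst ha'; subst hl'
      cases l with
      | nil =>
        have hmem : box ∈ pfBoxes rest (placed ++ [box]) :=
          (pfBoxes_prefix rest (placed ++ [box])).sublist.mem (by simp)
        have h := mem_le_colsOf hmem
        simpa [hbox] using h
      | cons b l' =>
        have hba : b ≤ sa.2 := (List.isChain_cons_cons.mp hc).1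
        have hmem : box ∈ placed ++ [box] := by simp
        have hb1 : b - 1 ≤ box.1 := by
          show b - 1 ≤ sa.2 - 1
          omega
        have hcol : box.2.1 + 1 ≤ pfCol (placed ++ [box]) (b - 1) :=
          pfCol_le_of_mem hmem hb1
        have h1 := ih (placed ++ [box]) b l' hs' hc.tail
        have hbx : box.2.1 = pfCol placed (sa.2 - 1) := rfl
        simp only [List.length_cons]
        omega

/-- Lower bound (construction): there is a weakly decreasing subword whose length
is the number of columns. -/
lemma pf_mem : ∀ (L : List (ℕ × ℕ)) (placed : List (ℕ × ℕ × ℕ)) (pre : List ℕ),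
    (∀ sa ∈ L, 1 ≤ sa.2) →
    (∀ r, ∃ l : List ℕ, l.Sublist pre ∧ List.Chain' (fun x y => y ≤ x) l ∧
      l.length = pfCol placed r ∧ ∀ x ∈ l, r + 1 ≤ x) →
    ∀ r, ∃ l : List ℕ, l.Sublist (pre ++ L.map Prod.snd) ∧
      List.Chain' (fun x y => y ≤ x) l ∧
      l.length = pfCol (pfBoxes L placed) r ∧ ∀ x ∈ l, r + 1 ≤ x := by
  intro L
  induction L with
  | nil => intro placed pre _ hinv r; simpa [pfBoxes] using hinv r
  | cons sa rest ih =>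
    intro placed pre hpos hinv r
    have ha : 1 ≤ sa.2 := hpos sa (by simp)
    set box : ℕ × ℕ × ℕ := (sa.2 - 1, pfCol placed (sa.2 - 1), sa.1) with hbox
    have hinv' : ∀ r, ∃ l : List ℕ, l.Sublist (pre ++ [sa.2]) ∧
        List.Chain' (fun x y => y ≤ x) l ∧
        l.length = pfCol (placed ++ [box]) r ∧ ∀ x ∈ l, r + 1 ≤ x := by
      intro r
      rw [pfCol_append, pfCol_singleton]
      by_cases hr : r ≤ box.1
      · rw [if_pos hr]
        by_cases hcc : box.2.1 + 1 ≤ pfCol placed r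
        · obtain ⟨l, h1, h2, h3, h4⟩ := hinv r
          exact ⟨l, h1.trans (List.sublist_append_left _ _), h2, by omega, h4⟩
        · obtain ⟨l, h1, h2, h3, h4⟩ := hinv (sa.2 - 1)
          refine ⟨l ++ [sa.2], h1.append (List.Sublist.refl _), ?_, ?_, ?_⟩
          · show List.IsChain (fun x y => y ≤ x) (l ++ [sa.2])
            rw [List.isChain_append]
            refine ⟨h2, List.isChain_singleton _, ?_⟩
            intro x hx y hy
            simp only [List.head?_cons, Option.mem_def, Option.some.injEq] at hy
            subst hy
            have hxl := h4 x (List.mem_of_mem_getLast? hx)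
            omega
          · have hbx : box.2.1 = pfCol placed (sa.2 - 1) := rfl
            simp only [List.length_append, List.length_singleton]
            omega
          · intro x hx
            rcases List.mem_append.mp hx with hx' | hx'
            · have := h4 x hx'
              have hrb : r ≤ sa.2 - 1 := hr
              omega
            · have : x = sa.2 := by simpa using hx'
              subst this
              have hrb : r ≤ sa.2 - 1 := hr
              omega
      · rw [if_neg hr]
        obtain ⟨l, h1, h2, h3, h4⟩ := hinv r
        exact ⟨l, h1.trans (List.sublist_append_left _ _), h2, by omega, h4⟩
    have hpos' : ∀ sa' ∈ rest, 1 ≤ sa'.2 := fun sa' h => hpos sa' (by simp [h])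
    have hres := ih (placed ++ [box]) (pre ++ [sa.2]) hpos' hinv' r
    rw [show pfBoxes (sa :: rest) placed = pfBoxes rest (placed ++ [box]) from rfl]
    simpa [List.append_assoc] using hres

lemma Pf_cols_eq (P : List (List ℕ)) (n : ℕ) :
    (Pf P n).cols = colsOf (pfBoxes (indexedLetters P 1) []) := rfl

/-- If `T = Pf(ω_𝒫)` for a parsed word `ω_𝒫`, the number of columns
of the left-justified representative `*T` (which is the output of `Pf`) is the
greatest length of a weakly decreasing subword (subsequence) of `ω`. -/
theorem cols_eq_longest_weakly_decreasing_subword (n : ℕ) (P : List (List ℕ))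
    (hP : IsParsedWord n P) (hne : flatP P ≠ []) :
    IsGreatest {m : ℕ | ∃ l : List ℕ, l.Sublist (flatP P) ∧
      List.Chain' (fun a b => b ≤ a) l ∧ l.length = m} (Pf P n).cols := by
  have hletters := indexedLetters_map_snd P 1
  constructor
  · -- membership: there is a weakly decreasing subword of length `cols`
    have hpos : ∀ sa ∈ indexedLetters P 1, 1 ≤ sa.2 :=
      indexedLetters_pos P 1 (fun h hh a hah => (hP.2 h hh a hah).1)
    have hbase : ∀ r, ∃ l : List ℕ, l.Sublist ([] : List ℕ) ∧
        List.Chain' (fun x y => y ≤ x) l ∧ l.length = pfCol [] r ∧ ∀ x ∈ l, r + 1 ≤ x := by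
      intro r
      exact ⟨[], List.Sublist.refl _, List.isChain_nil, by simp [pfCol], by simp⟩
    obtain ⟨l, h1, h2, h3, _⟩ := pf_mem (indexedLetters P 1) [] [] hpos hbase 0
    refine ⟨l, ?_, h2, ?_⟩
    · simpa [hletters] using h1
    · rw [Pf_cols_eq, ← pfCol_zero]; exact h3
  · -- upper bound
    rintro m ⟨l, hsub, hch, hlen⟩
    cases l with
    | nil => simp at hlen; omega
    | cons a l' =>
      have hub := pf_ub (indexedLetters P 1) [] a l'
        (by rw [hletters]; exact hsub) hch
      have h0 : pfCol [] (a - 1) = 0 := by simp [pfCol]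
      rw [Pf_cols_eq]
      simp only [List.length_cons] at hlen
      omega

end PerfTab
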